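/- arXiv:2602.04408 — 3 statements merged into one kernel-verified Lean document; each statement's English description precedes it below -/
import Mathlib

section
/- Let U and Z be discrete random variables with finite support, and let f, g be real-valued bounded functions with E[f(U)] = 0 and E[g(Z)] = 0. Then |E[f(U) g(Z)]| ≤ ||f||_∞ · ||g||_∞ · √(2 I(U;Z)). -/
open scoped BigOperators

noncomputable section

/-- Probability of an event under a weight function `μ` on a finite sample space. -/
def pr {Ω : Type*} [Fintype Ω] (μ : Ω → ℝ) (A : Set Ω) : ℝ :=
  ∑ ω, A.indicator μ ω

/-- `μ` is a probability mass function on the finite sample space. -/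
def IsPMF {Ω : Type*} [Fintype Ω] (μ : Ω → ℝ) : Prop :=
  (∀ ω, 0 ≤ μ ω) ∧ (∑ ω, μ ω) = 1

/-- Mutual information `I(U;Z)` (in nats) of finitely-valued random variables. -/
def MI {Ω α β : Type*} [Fintype Ω] [Fintype α] [Fintype β]
    (μ : Ω → ℝ) (U : Ω → α) (Z : Ω → β) : ℝ :=
  ∑ a : α, ∑ b : β,
    pr μ {ω | U ω = a ∧ Z ω = b} *
      Real.log (pr μ {ω | U ω = a ∧ Z ω = b} /
        (pr μ {ω | U ω = a} * pr μ {ω | Z ω = b}))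

/-- Conditional mutual information `I(U;Z∣Y)` (in nats). -/
def condMI {Ω α β γ : Type*} [Fintype Ω] [Fintype α] [Fintype β] [Fintype γ]
    (μ : Ω → ℝ) (U : Ω → α) (Z : Ω → β) (Y : Ω → γ) : ℝ :=
  ∑ y : γ, ∑ a : α, ∑ b : β,
    pr μ {ω | U ω = a ∧ Z ω = b ∧ Y ω = y} *
      Real.log ((pr μ {ω | Y ω = y} * pr μ {ω | U ω = a ∧ Z ω = b ∧ Y ω = y}) /
        (pr μ {ω | U ω = a ∧ Y ω = y} * pr μ {ω | Z ω = b ∧ Y ω = y}))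

/-- Shannon entropy `H(Y)` (in nats). -/
def ent {Ω γ : Type*} [Fintype Ω] [Fintype γ] (μ : Ω → ℝ) (Y : Ω → γ) : ℝ :=
  -∑ y : γ, pr μ {ω | Y ω = y} * Real.log (pr μ {ω | Y ω = y})

/-- Conditional entropy `H(Z∣Y)` (in nats). -/
def condEnt {Ω β γ : Type*} [Fintype Ω] [Fintype β] [Fintype γ]
    (μ : Ω → ℝ) (Z : Ω → β) (Y : Ω → γ) : ℝ :=
  ∑ y : γ, ∑ b : β,
    pr μ {ω | Z ω = b ∧ Y ω = y} *
      Real.log (pr μ {ω | Y ω = y} / pr μ {ω | Z ω = b ∧ Y ω = y})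

/-- Conditional independence `X ⊥ Z ∣ Y` (cross-multiplied form, valid also when
`P(Y = y) = 0`). -/
def CondIndep {Ω α β γ : Type*} [Fintype Ω]
    (μ : Ω → ℝ) (X : Ω → α) (Z : Ω → β) (Y : Ω → γ) : Prop :=
  ∀ (x : α) (z : β) (y : γ),
    pr μ {ω | Y ω = y} * pr μ {ω | X ω = x ∧ Z ω = z ∧ Y ω = y} =
      pr μ {ω | X ω = x ∧ Y ω = y} * pr μ {ω | Z ω = z ∧ Y ω = y}

end
open Real Set

private lemma denom_pos {t : ℝ} (ht : 0 < t) : (0:ℝ) < 2*(t+2) := by nlinarith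

private lemma hasDeriv_phi {t : ℝ} (ht : 0 < t) :
    HasDerivAt (fun s => s * Real.log s - s + 1 - 3*(s-1)^2/(2*(s+2)))
      (Real.log t - 3*(t-1)*(t+5)/(2*(t+2)^2)) t := by
  have hne : (2*(t+2)) ≠ 0 := (denom_pos ht).ne'
  have h1 : HasDerivAt (fun s : ℝ => s * Real.log s) (Real.log t + 1) t := by
    have := (hasDerivAt_id t).mul (Real.hasDerivAt_log ht.ne')
    exact this.congr_deriv (by simp [ht.ne'])
  have hnum : HasDerivAt (fun s : ℝ => 3*(s-1)^2) (3*(2*(t-1))) t := by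
    have : HasDerivAt (fun s : ℝ => (s-1)^2) (2*(t-1)^1*1) t :=
      (((hasDerivAt_id t).sub_const 1).pow 2)
    simpa using this.const_mul 3
  have hden : HasDerivAt (fun s : ℝ => 2*(s+2)) 2 t := by
    simpa using ((hasDerivAt_id t).add_const 2).const_mul 2
  have h2 := hnum.div hden hne
  have h := (h1.sub (hasDerivAt_id t)).add_const 1 |>.sub h2
  exact h.congr_deriv (by field_simp; ring)

private lemma hasDeriv_phi' {t : ℝ} (ht : 0 < t) :
    HasDerivAt (fun s => Real.log s - 3*(s-1)*(s+5)/(2*(s+2)^2))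
      (1/t - 27/(t+2)^3) t := by
  have ht2 : (0:ℝ) < t + 2 := by linarith
  have hne : (2*(t+2)^2) ≠ 0 := by positivity
  have hnum : HasDerivAt (fun s : ℝ => 3*(s-1)*(s+5)) (3*(t-1) + (t+5)*3) t := by
    have h1 : HasDerivAt (fun s : ℝ => 3*(s-1)) 3 t := by
      simpa using ((hasDerivAt_id t).sub_const 1).const_mul 3
    have h2 : HasDerivAt (fun s : ℝ => s+5) 1 t := (hasDerivAt_id t).add_const 5
    have := h1.mul h2
    exact this.congr_deriv (by ring)
  have hden : HasDerivAt (fun s : ℝ => 2*(s+2)^2) (2*(2*(t+2))) t := by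
    have : HasDerivAt (fun s : ℝ => (s+2)^2) (2*(t+2)^1*1) t :=
      ((hasDerivAt_id t).add_const 2).pow 2
    simpa using this.const_mul 2
  have h := (Real.hasDerivAt_log ht.ne').sub (hnum.div hden hne)
  exact h.congr_deriv (by field_simp; ring)

lemma psi_nonneg {t : ℝ} (ht : 0 < t) :
    3*(t-1)^2/(2*(t+2)) ≤ t * Real.log t - t + 1 := by
  set φ : ℝ → ℝ := fun s => s * Real.log s - s + 1 - 3*(s-1)^2/(2*(s+2)) with hφ
  set ψ : ℝ → ℝ := fun s => Real.log s - 3*(s-1)*(s+5)/(2*(s+2)^2) with hψ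
  have hψ1 : ψ 1 = 0 := by simp [hψ]
  have hφ1 : φ 1 = 0 := by norm_num [hφ]
  have hmono : MonotoneOn ψ (Set.Ioi (0:ℝ)) := by
    apply monotoneOn_of_deriv_nonneg (convex_Ioi 0)
    · exact fun s hs => (hasDeriv_phi' hs).continuousAt.continuousWithinAt
    · intro s hs
      rw [interior_Ioi] at hs
      exact (hasDeriv_phi' hs).differentiableAt.differentiableWithinAt
    · intro s hs
      rw [interior_Ioi] at hs
      rw [(hasDeriv_phi' hs).deriv]
      have hs2 : (0:ℝ) < s + 2 := by linarith [Set.mem_Ioi.1 hs]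
      have hs0 : (0:ℝ) < s := hs
      rw [sub_nonneg, div_le_div_iff₀ (by positivity) hs0]
      nlinarith [mul_nonneg (sq_nonneg (s-1)) (by linarith : (0:ℝ) ≤ s + 8)]
  suffices h : 0 ≤ φ t by
    simp only [hφ] at h; linarith
  rcases le_or_gt 1 t with h1 | h1
  · have hm : MonotoneOn φ (Set.Ici (1:ℝ)) := by
      apply monotoneOn_of_deriv_nonneg (convex_Ici 1)
      · exact fun s hs => (hasDeriv_phi (by linarith [Set.mem_Ici.1 hs] : (0:ℝ) < s)).continuousAt.continuousWithinAt
      · intro s hs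
        rw [interior_Ici] at hs
        exact (hasDeriv_phi (by linarith [Set.mem_Ioi.1 hs] : (0:ℝ) < s)).differentiableAt.differentiableWithinAt
      · intro s hs
        rw [interior_Ici] at hs
        have hs1 : (1:ℝ) < s := hs
        rw [(hasDeriv_phi (by linarith : (0:ℝ) < s)).deriv]
        have := hmono (Set.mem_Ioi.2 one_pos) (Set.mem_Ioi.2 (by linarith : (0:ℝ) < s)) hs1.le
        rw [hψ1] at this
        simpa [hψ] using this
    have := hm (Set.mem_Ici.2 le_rfl) (Set.mem_Ici.2 h1) h1
    rwa [hφ1] at this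
  · have hm : AntitoneOn φ (Set.Ioc (0:ℝ) 1) := by
      apply antitoneOn_of_deriv_nonpos (convex_Ioc 0 1)
      · exact fun s hs => (hasDeriv_phi hs.1).continuousAt.continuousWithinAt
      · intro s hs
        rw [interior_Ioc] at hs
        exact (hasDeriv_phi hs.1).differentiableAt.differentiableWithinAt
      · intro s hs
        rw [interior_Ioc] at hs
        rw [(hasDeriv_phi hs.1).deriv]
        have := hmono (Set.mem_Ioi.2 hs.1) (Set.mem_Ioi.2 one_pos) hs.2.le
        rw [hψ1] at this
        simpa [hψ] using this
    have := hm (Set.mem_Ioc.2 ⟨ht, h1.le⟩) (Set.mem_Ioc.2 ⟨one_pos, le_rfl⟩) h1.le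
    rwa [hφ1] at this
lemma pointwise_bound {x y : ℝ} (hx : 0 ≤ x) (hy : 0 ≤ y) (h0 : y = 0 → x = 0) :
    3*(x-y)^2/(2*(x+2*y)) ≤ x * Real.log (x / y) - x + y := by
  rcases eq_or_lt_of_le hy with hy0 | hy0
  · have hx0 : x = 0 := h0 hy0.symm
    simp [hx0, ← hy0]
  rcases eq_or_lt_of_le hx with hx0 | hx0
  · rw [← hx0]
    have e : 3*((0:ℝ)-y)^2/(2*(0+2*y)) = 3*y/4 := by
      field_simp [hy0.ne']; ring
    rw [e]
    simp only [zero_mul, zero_sub, neg_zero, zero_add, sub_zero]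
    linarith
  · have ht : 0 < x / y := div_pos hx0 hy0
    have h := psi_nonneg ht
    have e1 : x * Real.log (x/y) - x + y = y * ((x/y) * Real.log (x/y) - (x/y) + 1) := by
      field_simp
    have e2 : 3*(x-y)^2/(2*(x+2*y)) = y * (3*((x/y)-1)^2/(2*((x/y)+2))) := by
      have h3 : x + 2*y ≠ 0 := by positivity
      field_simp
    rw [e1, e2]
    exact mul_le_mul_of_nonneg_left h hy0.le
lemma pinsker_sum {ι : Type*} [Fintype ι] (p q : ι → ℝ) (hp : ∀ i, 0 ≤ p i) (hq : ∀ i, 0 ≤ q i)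
    (hp1 : ∑ i, p i = 1) (hq1 : ∑ i, q i = 1) (hac : ∀ i, q i = 0 → p i = 0) :
    ∑ i, |p i - q i| ≤ Real.sqrt (2 * ∑ i, p i * Real.log (p i / q i)) := by
  set KL := ∑ i, p i * Real.log (p i / q i) with hKL
  have hden : ∀ i, (0:ℝ) ≤ p i + 2 * q i := fun i => by nlinarith [hp i, hq i]
  have hA : ∀ i, 0 ≤ 3*(p i - q i)^2/(2*(p i + 2*q i)) := fun i =>
    div_nonneg (by positivity) (by nlinarith [hden i])
  have key : ∑ i, 3*(p i - q i)^2/(2*(p i + 2*q i)) ≤ KL := by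
    have e : KL = ∑ i, (p i * Real.log (p i / q i) - p i + q i) := by
      simp [Finset.sum_add_distrib, Finset.sum_sub_distrib, hp1, hq1, hKL]
    rw [e]
    exact Finset.sum_le_sum fun i _ => pointwise_bound (hp i) (hq i) (hac i)
  have habs : ∀ i, |p i - q i| =
      Real.sqrt (3*(p i - q i)^2/(2*(p i + 2*q i))) * Real.sqrt (2*(p i + 2*q i)/3) := by
    intro i
    rw [← Real.sqrt_mul (hA i)]
    rcases eq_or_lt_of_le (hden i) with h | h
    · have hq0 : q i = 0 := by nlinarith [hp i, hq i]
      have hp0 : p i = 0 := hac i hq0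
      simp [hp0, hq0]
    · have e : 3*(p i - q i)^2/(2*(p i + 2*q i)) * (2*(p i + 2*q i)/3) = (p i - q i)^2 := by
        field_simp
        exact mul_div_cancel_right₀ _ (by linarith)
      rw [e, Real.sqrt_sq_eq_abs]
  have hCS := Finset.sum_mul_sq_le_sq_mul_sq Finset.univ
      (fun i => Real.sqrt (3*(p i - q i)^2/(2*(p i + 2*q i))))
      (fun i => Real.sqrt (2*(p i + 2*q i)/3))
  have hBsum : ∑ i, 2*(p i + 2*q i)/3 = 2 := by
    rw [← Finset.sum_div, ← Finset.mul_sum, Finset.sum_add_distrib, ← Finset.mul_sum,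
      hp1, hq1]
    norm_num
  have hKLnn : 0 ≤ KL := le_trans (Finset.sum_nonneg fun i _ => hA i) key
  rw [Real.le_sqrt (Finset.sum_nonneg fun i _ => abs_nonneg _) (by linarith)]
  calc (∑ i, |p i - q i|)^2
      = (∑ i, Real.sqrt (3*(p i - q i)^2/(2*(p i + 2*q i))) * Real.sqrt (2*(p i + 2*q i)/3))^2 := by
        rw [Finset.sum_congr rfl fun i _ => habs i]
    _ ≤ (∑ i, Real.sqrt (3*(p i - q i)^2/(2*(p i + 2*q i)))^2) *
        (∑ i, Real.sqrt (2*(p i + 2*q i)/3)^2) := hCS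
    _ = (∑ i, 3*(p i - q i)^2/(2*(p i + 2*q i))) * (∑ i, 2*(p i + 2*q i)/3) := by
        rw [Finset.sum_congr rfl fun i _ => Real.sq_sqrt (hA i),
          Finset.sum_congr rfl fun i _ => Real.sq_sqrt (by nlinarith [hden i] : (0:ℝ) ≤ 2*(p i + 2*q i)/3)]
    _ = (∑ i, 3*(p i - q i)^2/(2*(p i + 2*q i))) * 2 := by rw [hBsum]
    _ ≤ KL * 2 := mul_le_mul_of_nonneg_right key (by norm_num)
    _ = 2 * KL := mul_comm _ _
section prhelp
variable {Ω α β : Type*} [Fintype Ω] [Fintype α] [Fintype β]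

lemma pr_eq_sum (μ : Ω → ℝ) (P : Ω → Prop) [DecidablePred P] :
    pr μ {ω | P ω} = ∑ ω, if P ω then μ ω else 0 := by
  classical
  simp [pr, Set.indicator_apply, Set.mem_setOf_eq]

lemma pr_marg_left (μ : Ω → ℝ) (U : Ω → α) (Z : Ω → β) (a : α) :
    ∑ b, pr μ {ω | U ω = a ∧ Z ω = b} = pr μ {ω | U ω = a} := by
  classical
  simp only [pr_eq_sum]
  rw [Finset.sum_comm]
  refine Finset.sum_congr rfl fun ω _ => ?_
  by_cases h : U ω = a <;> simp [h, Finset.sum_ite_eq]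

lemma pr_marg_right (μ : Ω → ℝ) (U : Ω → α) (Z : Ω → β) (b : β) :
    ∑ a, pr μ {ω | U ω = a ∧ Z ω = b} = pr μ {ω | Z ω = b} := by
  classical
  simp only [pr_eq_sum]
  rw [Finset.sum_comm]
  refine Finset.sum_congr rfl fun ω _ => ?_
  by_cases h : Z ω = b <;> simp [h, Finset.sum_ite_eq]

lemma sum_pr_fiber (μ : Ω → ℝ) (U : Ω → α) :
    ∑ a, pr μ {ω | U ω = a} = ∑ ω, μ ω := by
  classical
  simp only [pr_eq_sum]
  rw [Finset.sum_comm]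
  refine Finset.sum_congr rfl fun ω _ => ?_
  simp [Finset.sum_ite_eq]

lemma sum_pr_mul (μ : Ω → ℝ) (U : Ω → α) (f : α → ℝ) :
    ∑ a, pr μ {ω | U ω = a} * f a = ∑ ω, μ ω * f (U ω) := by
  classical
  simp only [pr_eq_sum, Finset.sum_mul]
  rw [Finset.sum_comm]
  refine Finset.sum_congr rfl fun ω _ => ?_
  simp [ite_mul, Finset.sum_ite_eq]

lemma sum_pr_mul2 (μ : Ω → ℝ) (U : Ω → α) (Z : Ω → β) (F : α → β → ℝ) :
    ∑ a, ∑ b, pr μ {ω | U ω = a ∧ Z ω = b} * F a b = ∑ ω, μ ω * F (U ω) (Z ω) := by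
  classical
  simp only [pr_eq_sum, Finset.sum_mul]
  rw [Finset.sum_congr rfl fun a _ => Finset.sum_comm, Finset.sum_comm]
  refine Finset.sum_congr rfl fun ω _ => ?_
  simp [ite_and, ite_mul, Finset.sum_ite_eq]

lemma pr_nonneg' (μ : Ω → ℝ) (hμ0 : ∀ ω, 0 ≤ μ ω) (P : Ω → Prop) [DecidablePred P] :
    0 ≤ pr μ {ω | P ω} := by
  rw [pr_eq_sum]
  exact Finset.sum_nonneg fun ω _ => by split <;> simp [hμ0 ω]

lemma pr_mono' (μ : Ω → ℝ) (hμ0 : ∀ ω, 0 ≤ μ ω) (P Q : Ω → Prop) [DecidablePred P]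
    [DecidablePred Q] (h : ∀ ω, P ω → Q ω) :
    pr μ {ω | P ω} ≤ pr μ {ω | Q ω} := by
  rw [pr_eq_sum, pr_eq_sum]
  refine Finset.sum_le_sum fun ω _ => ?_
  by_cases hP : P ω
  · simp [hP, h ω hP]
  · simp only [if_neg hP]
    split <;> simp [hμ0 ω]

lemma pr_eq_zero_of_empty (μ : Ω → ℝ) (P : Ω → Prop) [DecidablePred P]
    (h : ∀ ω, ¬ P ω) : pr μ {ω | P ω} = 0 := by
  rw [pr_eq_sum]
  exact Finset.sum_eq_zero fun ω _ => if_neg (h ω)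

end prhelp
section mainproof

open Finset in
/-- mutual information uniformly controls the covariance of bounded
zero-mean functionals: `|E[f(U) g(Z)]| ≤ ‖f‖_∞ ‖g‖_∞ √(2 I(U;Z))`. -/
theorem abs_cov_le_sqrt_two_MI
    {Ω α β : Type*} [Fintype Ω] [Fintype α] [Fintype β]
    (μ : Ω → ℝ) (hμ : IsPMF μ) (U : Ω → α) (Z : Ω → β)
    (f : α → ℝ) (g : β → ℝ) (Mf Mg : ℝ)
    (hf : ∀ ω, |f (U ω)| ≤ Mf) (hg : ∀ ω, |g (Z ω)| ≤ Mg)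
    (hfm : (∑ ω, μ ω * f (U ω)) = 0) (hgm : (∑ ω, μ ω * g (Z ω)) = 0) :
    |∑ ω, μ ω * (f (U ω) * g (Z ω))| ≤ Mf * Mg * Real.sqrt (2 * MI μ U Z) := by
  classical
  obtain ⟨hμ0, hμ1⟩ := hμ
  have hΩ : Nonempty Ω := by
    by_contra h
    rw [not_nonempty_iff] at h
    rw [Finset.univ_eq_empty, Finset.sum_empty] at hμ1
    exact one_ne_zero hμ1.symm
  obtain ⟨ω₀⟩ := hΩ
  have hMf : 0 ≤ Mf := (abs_nonneg _).trans (hf ω₀)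
  have hMg : 0 ≤ Mg := (abs_nonneg _).trans (hg ω₀)
  set p : α × β → ℝ := fun s => pr μ {ω | U ω = s.1 ∧ Z ω = s.2} with hpdef
  set q : α × β → ℝ := fun s => pr μ {ω | U ω = s.1} * pr μ {ω | Z ω = s.2} with hqdef
  have hp0 : ∀ s, 0 ≤ p s := fun s => pr_nonneg' μ hμ0 _
  have hq0 : ∀ s, 0 ≤ q s := fun s =>
    mul_nonneg (pr_nonneg' μ hμ0 _) (pr_nonneg' μ hμ0 _)
  have hp1 : ∑ s, p s = 1 := by
    rw [Fintype.sum_prod_type]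
    simp only [hpdef]
    rw [Finset.sum_congr rfl fun a _ => pr_marg_left μ U Z a, sum_pr_fiber μ U, hμ1]
  have hBsum : ∑ b, pr μ {ω | Z ω = b} = 1 := by rw [sum_pr_fiber μ Z, hμ1]
  have hAsum : ∑ a, pr μ {ω | U ω = a} = 1 := by rw [sum_pr_fiber μ U, hμ1]
  have hq1 : ∑ s, q s = 1 := by
    rw [Fintype.sum_prod_type]
    simp only [hqdef]
    rw [Finset.sum_congr rfl fun a _ => by rw [← Finset.mul_sum, hBsum, mul_one], hAsum]
  have hple : ∀ s : α × β, p s ≤ pr μ {ω | U ω = s.1} :=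
    fun s => by
      have := pr_mono' μ hμ0 (fun ω => U ω = s.1 ∧ Z ω = s.2) (fun ω => U ω = s.1)
        (fun ω h => h.1)
      simpa [hpdef] using this
  have hple2 : ∀ s : α × β, p s ≤ pr μ {ω | Z ω = s.2} :=
    fun s => by
      have := pr_mono' μ hμ0 (fun ω => U ω = s.1 ∧ Z ω = s.2) (fun ω => Z ω = s.2)
        (fun ω h => h.2)
      simpa [hpdef] using this
  have hac : ∀ s, q s = 0 → p s = 0 := by
    intro s hqs
    rcases mul_eq_zero.1 hqs with h | h
    · exact le_antisymm (h ▸ hple s) (hp0 s)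
    · exact le_antisymm (h ▸ hple2 s) (hp0 s)
  have hMI : MI μ U Z = ∑ s : α × β, p s * Real.log (p s / q s) := by
    rw [Fintype.sum_prod_type]
    rfl
  have hpinsker : ∑ s, |p s - q s| ≤ Real.sqrt (2 * MI μ U Z) := by
    rw [hMI]
    exact pinsker_sum p q hp0 hq0 hp1 hq1 hac
  have hE : ∑ ω, μ ω * (f (U ω) * g (Z ω)) = ∑ s : α × β, p s * (f s.1 * g s.2) := by
    rw [Fintype.sum_prod_type]
    exact (sum_pr_mul2 μ U Z (fun a b => f a * g b)).symm
  have hQ0 : ∑ s : α × β, q s * (f s.1 * g s.2) = 0 := by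
    rw [Fintype.sum_prod_type]
    have : ∀ a b, q (a, b) * (f a * g b) =
        (pr μ {ω | U ω = a} * f a) * (pr μ {ω | Z ω = b} * g b) := by
      intro a b; simp only [hqdef]; ring
    simp only [this]
    rw [← Finset.sum_mul_sum]
    rw [sum_pr_mul μ U f, sum_pr_mul μ Z g, hfm, hgm, mul_zero]
  have hsplit : ∑ ω, μ ω * (f (U ω) * g (Z ω)) =
      ∑ s : α × β, (p s - q s) * (f s.1 * g s.2) := by
    rw [hE]
    rw [Finset.sum_congr rfl fun s _ => (sub_mul (p s) (q s) _)]
    rw [Finset.sum_sub_distrib, hQ0, sub_zero]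
  have hterm : ∀ s : α × β, |(p s - q s) * (f s.1 * g s.2)| ≤ Mf * Mg * |p s - q s| := by
    intro s
    by_cases ha : ∃ ω, U ω = s.1
    · by_cases hb : ∃ ω, Z ω = s.2
      · obtain ⟨ω₁, hω₁⟩ := ha
        obtain ⟨ω₂, hω₂⟩ := hb
        rw [abs_mul, abs_mul]
        calc |p s - q s| * (|f s.1| * |g s.2|)
            ≤ |p s - q s| * (Mf * Mg) := by
              apply mul_le_mul_of_nonneg_left _ (abs_nonneg _)
              exact mul_le_mul (hω₁ ▸ hf ω₁) (hω₂ ▸ hg ω₂) (abs_nonneg _) hMf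
          _ = Mf * Mg * |p s - q s| := by ring
      · push_neg at hb
        have h1 : p s = 0 := pr_eq_zero_of_empty μ _ (fun ω h => hb ω h.2)
        have h2 : pr μ {ω | Z ω = s.2} = 0 := pr_eq_zero_of_empty μ _ hb
        have h3 : q s = 0 := by rw [hqdef]; simp [h2]
        simp [h1, h3]
    · push_neg at ha
      have h1 : p s = 0 := pr_eq_zero_of_empty μ _ (fun ω h => ha ω h.1)
      have h2 : pr μ {ω | U ω = s.1} = 0 := pr_eq_zero_of_empty μ _ ha
      have h3 : q s = 0 := by rw [hqdef]; simp [h2]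
      simp [h1, h3]
  calc |∑ ω, μ ω * (f (U ω) * g (Z ω))|
      = |∑ s : α × β, (p s - q s) * (f s.1 * g s.2)| := by rw [hsplit]
    _ ≤ ∑ s : α × β, |(p s - q s) * (f s.1 * g s.2)| := Finset.abs_sum_le_sum_abs _ _
    _ ≤ ∑ s : α × β, Mf * Mg * |p s - q s| := Finset.sum_le_sum fun s _ => hterm s
    _ = Mf * Mg * ∑ s, |p s - q s| := by rw [Finset.mul_sum]
    _ ≤ Mf * Mg * Real.sqrt (2 * MI μ U Z) :=
        mul_le_mul_of_nonneg_left hpinsker (mul_nonneg hMf hMg)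

end mainproof
end

section
/- For discrete random variables U, Y, Z with finite support, let f, g be bounded functions with E[f(U)|Y=y]=0 and E[g(Z)|Y=y]=0 for all y with P(Y=y)>0. Then E_y[ |E[f(U)g(Z) | Y=y]| ] ≤ ||f||_∞ ||g||_∞ √(2 I(U;Z|Y)), where the outer expectation is over Y. -/
open scoped BigOperators

noncomputable section PinskerAux
noncomputable def Gc (t : ℝ) : ℝ := (t+1) * Real.log t - 2*(t-1)
noncomputable def Fc (t : ℝ) : ℝ := 2*(t+2)*(t * Real.log t - t + 1) - 3*(t-1)^2

lemma hasDerivAt_Gc {t : ℝ} (ht : t ≠ 0) :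
    HasDerivAt Gc (Real.log t + (t+1)/t - 2) t := by
  have h1 : HasDerivAt (fun t : ℝ => (t+1) * Real.log t)
      (1 * Real.log t + (t+1) * t⁻¹) t :=
    (((hasDerivAt_id t).add_const 1)).mul ((Real.hasDerivAt_log ht))
  have h2 : HasDerivAt (fun t : ℝ => 2*(t-1)) 2 t := by
    simpa using ((hasDerivAt_id t).sub_const 1).const_mul 2
  have := h1.sub h2
  refine this.congr_deriv ?_
  field_simp

lemma hasDerivAt_Fc {t : ℝ} (ht : t ≠ 0) : HasDerivAt Fc (4 * Gc t) t := by
  have hl : HasDerivAt (fun t : ℝ => t * Real.log t) (Real.log t + 1) t := by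
    have := (hasDerivAt_id t).mul (Real.hasDerivAt_log ht)
    simp only [one_mul, id_eq] at this
    refine this.congr_deriv ?_
    field_simp
  have h1 : HasDerivAt (fun t : ℝ => t * Real.log t - t + 1) (Real.log t + 1 - 1) t :=
    (hl.sub (hasDerivAt_id t)).add_const 1
  have h2 : HasDerivAt (fun t : ℝ => 2*(t+2)) 2 t := by
    simpa using ((hasDerivAt_id t).add_const 2).const_mul 2
  have h3 : HasDerivAt (fun t : ℝ => 2*(t+2)*(t * Real.log t - t + 1))
      (2 * (t * Real.log t - t + 1) + 2*(t+2) * (Real.log t + 1 - 1)) t := by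
    exact h2.mul h1
  have h4 : HasDerivAt (fun t : ℝ => 3*(t-1)^2) (3*(2*(t-1))) t := by
    have := (((hasDerivAt_id t).sub_const 1).pow 2).const_mul 3
    simpa using this
  have := h3.sub h4
  refine this.congr_deriv ?_
  simp only [Gc]
  ring

lemma Gc_deriv_nonneg {t : ℝ} (ht : 0 < t) : 0 ≤ Real.log t + (t+1)/t - 2 := by
  have h : Real.log t⁻¹ ≤ t⁻¹ - 1 := Real.log_le_sub_one_of_pos (by positivity)
  rw [Real.log_inv] at h
  have : 1 - t⁻¹ ≤ Real.log t := by linarith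
  have h2 : (t+1)/t = 1 + t⁻¹ := by field_simp
  rw [h2]; linarith

lemma Gc_mono : MonotoneOn Gc (Set.Ioi (0:ℝ)) := by
  apply monotoneOn_of_deriv_nonneg (convex_Ioi 0)
  · exact fun t ht => (hasDerivAt_Gc (ne_of_gt ht)).continuousAt.continuousWithinAt
  · intro t ht
    rw [interior_Ioi] at ht
    exact (hasDerivAt_Gc (ne_of_gt ht)).differentiableAt.differentiableWithinAt
  · intro t ht
    rw [interior_Ioi] at ht
    rw [(hasDerivAt_Gc (ne_of_gt ht)).deriv]
    exact Gc_deriv_nonneg ht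

lemma Gc_one : Gc 1 = 0 := by simp [Gc]
lemma Fc_one : Fc 1 = 0 := by norm_num [Fc]

lemma Fc_nonneg {t : ℝ} (ht : 0 ≤ t) : 0 ≤ Fc t := by
  rcases eq_or_lt_of_le ht with h | h
  · simp [Fc, ← h]; norm_num
  rcases le_total 1 t with h1 | h1
  · have mono : MonotoneOn Fc (Set.Ici (1:ℝ)) := by
      apply monotoneOn_of_deriv_nonneg (convex_Ici 1)
      · exact fun s hs => (hasDerivAt_Fc (by rintro rfl; simp at hs; linarith)).continuousAt.continuousWithinAt
      · intro s hs
        rw [interior_Ici] at hs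
        exact (hasDerivAt_Fc (by rintro rfl; simp at hs; linarith)).differentiableAt.differentiableWithinAt
      · intro s hs
        rw [interior_Ici] at hs
        have hs1 : (1:ℝ) < s := hs
        rw [(hasDerivAt_Fc (by linarith)).deriv]
        have := Gc_mono (Set.mem_Ioi.2 one_pos) (Set.mem_Ioi.2 (by linarith)) (le_of_lt hs1)
        rw [Gc_one] at this
        linarith
    have := mono (Set.mem_Ici.2 le_rfl) (Set.mem_Ici.2 h1) h1
    rw [Fc_one] at this; exact this
  · have anti : AntitoneOn Fc (Set.Ioc (0:ℝ) 1) := by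
      apply antitoneOn_of_deriv_nonpos (convex_Ioc 0 1)
      · exact fun s hs => (hasDerivAt_Fc (ne_of_gt hs.1)).continuousAt.continuousWithinAt
      · intro s hs
        rw [interior_Ioc] at hs
        exact (hasDerivAt_Fc (ne_of_gt hs.1)).differentiableAt.differentiableWithinAt
      · intro s hs
        rw [interior_Ioc] at hs
        rw [(hasDerivAt_Fc (ne_of_gt hs.1)).deriv]
        have := Gc_mono (Set.mem_Ioi.2 hs.1) (Set.mem_Ioi.2 one_pos) (le_of_lt hs.2)
        rw [Gc_one] at this
        linarith
    have := anti (Set.mem_Ioc.2 ⟨h, h1⟩) (Set.mem_Ioc.2 ⟨one_pos, le_rfl⟩) h1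
    rw [Fc_one] at this; exact this

lemma key_ineq {t : ℝ} (ht : 0 ≤ t) :
    3*(t-1)^2 ≤ 2*(t+2)*(t * Real.log t - t + 1) := by
  have := Fc_nonneg ht
  simp only [Fc] at this
  linarith


lemma pinsker_finite {ι : Type*} [Fintype ι] (p q : ι → ℝ)
    (hp : ∀ i, 0 ≤ p i) (hq : ∀ i, 0 ≤ q i)
    (hp1 : ∑ i, p i = 1) (hq1 : ∑ i, q i = 1)
    (habs : ∀ i, q i = 0 → p i = 0) :
    (∑ i, |p i - q i|)^2 ≤ 2 * ∑ i, p i * Real.log (p i / q i) := by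
  classical
  set A : ι → ℝ := fun i => (p i + 2 * q i)/3 with hA
  set B : ι → ℝ := fun i => if p i + 2 * q i = 0 then 0 else 3*(p i - q i)^2/(p i + 2*q i) with hB
  have hAnn : ∀ i, 0 ≤ A i := fun i => by have := hp i; have := hq i; positivity
  have hBnn : ∀ i, 0 ≤ B i := by
    intro i
    simp only [hB]
    split
    · exact le_rfl
    · next h =>
        have h1 : 0 < p i + 2 * q i := lt_of_le_of_ne (by have := hp i; have := hq i; linarith) (Ne.symm h)
        positivity
  have habd : ∀ i, |p i - q i| = Real.sqrt (A i) * Real.sqrt (B i) := by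
    intro i
    by_cases h : p i + 2 * q i = 0
    · have hp0 : p i = 0 := by have := hp i; have := hq i; linarith
      have hq0 : q i = 0 := by have := hp i; have := hq i; linarith
      simp [hA, hB, h, hp0, hq0]
    · have h1 : 0 < p i + 2 * q i := lt_of_le_of_ne (by have := hp i; have := hq i; linarith) (Ne.symm h)
      rw [← Real.sqrt_mul (hAnn i)]
      have : A i * B i = (p i - q i)^2 := by
        simp only [hA, hB, if_neg h]
        field_simp
      rw [this, Real.sqrt_sq_eq_abs]
  have hBle : ∀ i, B i ≤ 2 * (p i * Real.log (p i / q i) - p i + q i) := by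
    intro i
    by_cases hq0 : q i = 0
    · have hp0 := habs i hq0
      simp [hB, hp0, hq0]
    · have hqpos : 0 < q i := lt_of_le_of_ne (hq i) (Ne.symm hq0)
      set t := p i / q i with hT
      have htnn : 0 ≤ t := div_nonneg (hp i) (hq i)
      have hpt : p i = q i * t := by rw [hT]; field_simp
      have key := key_ineq htnn
      have hne : p i + 2 * q i ≠ 0 := by nlinarith
      simp only [hB, if_neg hne]
      rw [div_le_iff₀ (by nlinarith)]
      have hlog : Real.log (p i / q i) = Real.log t := by rw [hT]
      rw [hlog, hpt]
      have key2 : q i^2 * (3*(t-1)^2) ≤ q i^2 * (2*(t+2)*(t * Real.log t - t + 1)) :=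
        mul_le_mul_of_nonneg_left key (sq_nonneg _)
      nlinarith [key2]
  have hsB : ∑ i, B i ≤ 2 * ∑ i, p i * Real.log (p i / q i) := by
    calc ∑ i, B i ≤ ∑ i, 2 * (p i * Real.log (p i / q i) - p i + q i) :=
          Finset.sum_le_sum fun i _ => hBle i
      _ = 2 * ∑ i, p i * Real.log (p i / q i) := by
          rw [Finset.sum_congr rfl (fun i _ => by ring : ∀ i ∈ Finset.univ,
            2 * (p i * Real.log (p i / q i) - p i + q i)
              = 2 * (p i * Real.log (p i / q i)) - 2 * p i + 2 * q i)]
          rw [Finset.sum_add_distrib, Finset.sum_sub_distrib, ← Finset.mul_sum,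
            ← Finset.mul_sum, ← Finset.mul_sum, hp1, hq1]
          ring
  have hsA : ∑ i, A i = 1 := by
    simp only [hA]
    rw [← Finset.sum_div]
    rw [Finset.sum_add_distrib, ← Finset.mul_sum, hp1, hq1]
    norm_num
  calc (∑ i, |p i - q i|)^2 = (∑ i, Real.sqrt (A i) * Real.sqrt (B i))^2 := by
        rw [Finset.sum_congr rfl fun i _ => habd i]
    _ ≤ (∑ i, Real.sqrt (A i)^2) * (∑ i, Real.sqrt (B i)^2) :=
        Finset.sum_mul_sq_le_sq_mul_sq _ _ _
    _ = (∑ i, A i) * (∑ i, B i) := by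
        rw [Finset.sum_congr rfl fun i _ => Real.sq_sqrt (hAnn i),
          Finset.sum_congr rfl fun i _ => Real.sq_sqrt (hBnn i)]
    _ ≤ 1 * (2 * ∑ i, p i * Real.log (p i / q i)) := by
        rw [hsA]; rw [one_mul, one_mul]; exact hsB
    _ = 2 * ∑ i, p i * Real.log (p i / q i) := one_mul _

end PinskerAux

section helpers
variable {Ω : Type*} [Fintype Ω] {μ : Ω → ℝ}

lemma pr_nonneg'_s2 (h : ∀ ω, 0 ≤ μ ω) (A : Set Ω) : 0 ≤ pr μ A :=
  Finset.sum_nonneg fun ω _ => Set.indicator_nonneg (fun a _ => h a) ω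

lemma pr_mono'_s2 (h : ∀ ω, 0 ≤ μ ω) {A B : Set Ω} (hAB : A ⊆ B) : pr μ A ≤ pr μ B :=
  Finset.sum_le_sum fun ω _ => Set.indicator_le_indicator_of_subset hAB (fun a => h a) ω

lemma pr_congr' {A B : Set Ω} (h : ∀ ω, ω ∈ A ↔ ω ∈ B) : pr μ A = pr μ B := by
  rw [Set.ext h]

lemma pr_fiber_sum' {δ : Type*} [Fintype δ] (μ : Ω → ℝ) (V : Ω → δ) (P : Ω → Prop) :
    ∑ d, pr μ {ω | V ω = d ∧ P ω} = pr μ {ω | P ω} := by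
  classical
  unfold pr
  rw [Finset.sum_comm]
  refine Finset.sum_congr rfl fun ω _ => ?_
  by_cases hP : P ω <;>
    simp [Set.indicator_apply, Set.mem_setOf_eq, hP]

lemma pr_fiber_total' (μ : Ω → ℝ) {δ : Type*} [Fintype δ] (V : Ω → δ) :
    ∑ d, pr μ {ω | V ω = d} = ∑ ω, μ ω := by
  classical
  unfold pr
  rw [Finset.sum_comm]
  refine Finset.sum_congr rfl fun ω _ => ?_
  simp [Set.indicator_apply, Set.mem_setOf_eq]

lemma pr_fiber_weighted' {δ : Type*} [Fintype δ] (μ : Ω → ℝ) (V : Ω → δ) (P : Ω → Prop)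
    (h : δ → ℝ) :
    ∑ d, h d * pr μ {ω | V ω = d ∧ P ω}
      = ∑ ω, Set.indicator {ω | P ω} (fun ω => μ ω * h (V ω)) ω := by
  classical
  unfold pr
  simp_rw [Finset.mul_sum]
  rw [Finset.sum_comm]
  refine Finset.sum_congr rfl fun ω _ => ?_
  by_cases hP : P ω <;>
    simp [Set.indicator_apply, Set.mem_setOf_eq, hP, mul_comm]

lemma cov_expand' {α β : Type*} [Fintype α] [Fintype β] (μ : Ω → ℝ)
    (U : Ω → α) (Z : Ω → β) (P : Ω → Prop) (f : α → ℝ) (g : β → ℝ) :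
    ∑ a, ∑ b, f a * g b * pr μ {ω | U ω = a ∧ Z ω = b ∧ P ω}
      = ∑ ω, Set.indicator {ω | P ω} (fun ω => μ ω * (f (U ω) * g (Z ω))) ω := by
  classical
  unfold pr
  simp_rw [Finset.mul_sum]
  have h1 : ∀ a : α, ∑ b, ∑ ω, f a * g b * Set.indicator {ω | U ω = a ∧ Z ω = b ∧ P ω} μ ω
      = ∑ ω, ∑ b, f a * g b * Set.indicator {ω | U ω = a ∧ Z ω = b ∧ P ω} μ ω :=
    fun a => Finset.sum_comm
  simp_rw [h1]
  rw [Finset.sum_comm]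
  refine Finset.sum_congr rfl fun ω _ => ?_
  by_cases hP : P ω <;>
    simp [Set.indicator_apply, Set.mem_setOf_eq, hP, mul_ite, ite_and, mul_comm, mul_left_comm]

end helpers

lemma pr_pos_elim' {Ω : Type*} [Fintype Ω] {μ : Ω → ℝ} {A : Set Ω} (h : 0 < pr μ A) :
    ∃ ω, ω ∈ A := by
  by_contra hn
  push_neg at hn
  have hz : pr μ A = 0 :=
    Finset.sum_eq_zero fun ω _ => Set.indicator_of_notMem (hn ω) μ
  rw [hz] at h
  exact lt_irrefl 0 h

/-- conditional mutual information controls the average conditional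
covariance of bounded, conditionally zero-mean functionals:
`E_y |E[f(U) g(Z) ∣ Y=y]| ≤ ‖f‖_∞ ‖g‖_∞ √(2 I(U;Z∣Y))`.
(The summand `∑_ω 1{Y ω = y} μ ω f(U ω) g(Z ω)` equals `P(Y=y)·E[f(U)g(Z)∣Y=y]`.) -/
theorem avg_abs_cond_cov_le_sqrt_two_condMI
    {Ω α β γ : Type*} [Fintype Ω] [Fintype α] [Fintype β] [Fintype γ]
    (μ : Ω → ℝ) (hμ : IsPMF μ) (U : Ω → α) (Z : Ω → β) (Y : Ω → γ)
    (f : α → ℝ) (g : β → ℝ) (Mf Mg : ℝ)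
    (hf : ∀ ω, |f (U ω)| ≤ Mf) (hg : ∀ ω, |g (Z ω)| ≤ Mg)
    (hfm : ∀ y : γ, 0 < pr μ {ω | Y ω = y} →
      (∑ ω, ({ω | Y ω = y}).indicator (fun ω => μ ω * f (U ω)) ω) = 0)
    (hgm : ∀ y : γ, 0 < pr μ {ω | Y ω = y} →
      (∑ ω, ({ω | Y ω = y}).indicator (fun ω => μ ω * g (Z ω)) ω) = 0) :
    (∑ y : γ, |∑ ω, ({ω | Y ω = y}).indicator (fun ω => μ ω * (f (U ω) * g (Z ω))) ω|)
      ≤ Mf * Mg * Real.sqrt (2 * condMI μ U Z Y) := by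
  classical
  obtain ⟨hμ0, hμ1⟩ := hμ
  have hΩ : Nonempty Ω := by
    by_contra h
    rw [not_nonempty_iff] at h
    rw [Finset.univ_eq_empty, Finset.sum_empty] at hμ1
    norm_num at hμ1
  obtain ⟨ω0⟩ := hΩ
  have hMf : 0 ≤ Mf := le_trans (abs_nonneg _) (hf ω0)
  have hMg : 0 ≤ Mg := le_trans (abs_nonneg _) (hg ω0)
  let pY : γ → ℝ := fun y => pr μ {ω | Y ω = y}
  let J : γ → α → β → ℝ := fun y a b => pr μ {ω | U ω = a ∧ Z ω = b ∧ Y ω = y}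
  let PA : γ → α → ℝ := fun y a => pr μ {ω | U ω = a ∧ Y ω = y}
  let PB : γ → β → ℝ := fun y b => pr μ {ω | Z ω = b ∧ Y ω = y}
  let slice : γ → ℝ :=
    fun y => ∑ a, ∑ b, J y a b * Real.log ((pY y * J y a b) / (PA y a * PB y b))
  have hcond : condMI μ U Z Y = ∑ y, slice y := rfl
  let S : γ → ℝ :=
    fun y => ∑ ω, Set.indicator {ω | Y ω = y} (fun ω => μ ω * (f (U ω) * g (Z ω))) ω
  -- basic facts
  have hpY0 : ∀ y, 0 ≤ pY y := fun y => pr_nonneg'_s2 hμ0 _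
  have hJ0 : ∀ y a b, 0 ≤ J y a b := fun y a b => pr_nonneg'_s2 hμ0 _
  have hJA : ∀ y a b, J y a b ≤ PA y a :=
    fun y a b => pr_mono'_s2 hμ0 (fun ω hω => ⟨hω.1, hω.2.2⟩)
  have hJB : ∀ y a b, J y a b ≤ PB y b :=
    fun y a b => pr_mono'_s2 hμ0 (fun ω hω => hω.2)
  have hPA0 : ∀ y a, 0 ≤ PA y a := fun y a => pr_nonneg'_s2 hμ0 _
  have hPB0 : ∀ y b, 0 ≤ PB y b := fun y b => pr_nonneg'_s2 hμ0 _
  have hAsum : ∀ y, ∑ a, PA y a = pY y := fun y => pr_fiber_sum' μ U (fun ω => Y ω = y)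
  have hBsum : ∀ y, ∑ b, PB y b = pY y := fun y => pr_fiber_sum' μ Z (fun ω => Y ω = y)
  have hJsum : ∀ y a, ∑ b, J y a b = PA y a := by
    intro y a
    have he : ∀ b, J y a b = pr μ {ω | Z ω = b ∧ (U ω = a ∧ Y ω = y)} := fun b =>
      pr_congr' (fun ω => by simp only [Set.mem_setOf_eq]; tauto)
    simp_rw [he]
    exact pr_fiber_sum' μ Z (fun ω => U ω = a ∧ Y ω = y)
  have hJsum2 : ∀ y, ∑ a, ∑ b, J y a b = pY y := by
    intro y
    simp_rw [hJsum]
    exact hAsum y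
  have hSexp : ∀ y, S y = ∑ a, ∑ b, f a * g b * J y a b := fun y =>
    (cov_expand' μ U Z (fun ω => Y ω = y) f g).symm
  -- key per-y bound
  have key : ∀ y, 0 ≤ slice y ∧
      |S y| ≤ Mf * Mg * (Real.sqrt (pY y) * Real.sqrt (2 * slice y)) := by
    intro y
    by_cases hc : 0 < pY y
    · have hcne : pY y ≠ 0 := ne_of_gt hc
      let p : α × β → ℝ := fun ab => J y ab.1 ab.2 / pY y
      let q : α × β → ℝ := fun ab => PA y ab.1 * PB y ab.2 / (pY y * pY y)
      have hpnn : ∀ i, 0 ≤ p i := fun i => div_nonneg (hJ0 _ _ _) (le_of_lt hc)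
      have hqnn : ∀ i, 0 ≤ q i := fun i =>
        div_nonneg (mul_nonneg (hPA0 _ _) (hPB0 _ _)) (by positivity)
      have hp1 : ∑ i, p i = 1 := by
        show ∑ i : α × β, J y i.1 i.2 / pY y = 1
        rw [Fintype.sum_prod_type]
        simp_rw [← Finset.sum_div]
        rw [hJsum2 y, div_self hcne]
      have hq1 : ∑ i, q i = 1 := by
        show ∑ i : α × β, PA y i.1 * PB y i.2 / (pY y * pY y) = 1
        rw [Fintype.sum_prod_type]
        have h2 : ∀ a, ∑ b, PA y a * PB y b / (pY y * pY y)
            = PA y a * pY y / (pY y * pY y) := fun a => by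
          rw [← Finset.sum_div, ← Finset.mul_sum, hBsum y]
        simp_rw [h2]
        rw [← Finset.sum_div, ← Finset.sum_mul, hAsum y, div_self (by positivity)]
      have habs : ∀ i, q i = 0 → p i = 0 := by
        rintro ⟨a, b⟩ h0
        have h0' : PA y a * PB y b = 0 := by
          rcases div_eq_zero_iff.1 h0 with h | h
          · exact h
          · exact absurd h (by positivity)
        have hJ00 : J y a b = 0 := by
          rcases mul_eq_zero.1 h0' with h | h
          · exact le_antisymm (h ▸ hJA y a b) (hJ0 y a b)
          · exact le_antisymm (h ▸ hJB y a b) (hJ0 y a b)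
        show J y a b / pY y = 0
        rw [hJ00, zero_div]
      have hpin := pinsker_finite p q hpnn hqnn hp1 hq1 habs
      have hKL0 : 0 ≤ ∑ i, p i * Real.log (p i / q i) := by
        nlinarith [sq_nonneg (∑ i, |p i - q i|)]
      have harg : ∀ a b, p (a, b) / q (a, b)
          = (pY y * J y a b) / (PA y a * PB y b) := by
        intro a b
        by_cases h0 : PA y a * PB y b = 0
        · show (J y a b / pY y) / (PA y a * PB y b / (pY y * pY y)) = _
          rw [h0, zero_div, div_zero, div_zero]
        · show (J y a b / pY y) / (PA y a * PB y b / (pY y * pY y)) = _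
          field_simp
      have hsliceKL : slice y = pY y * ∑ i, p i * Real.log (p i / q i) := by
        rw [Finset.mul_sum, Fintype.sum_prod_type]
        refine Finset.sum_congr rfl fun a _ => ?_
        refine Finset.sum_congr rfl fun b _ => ?_
        rw [harg a b]
        show J y a b * _ = pY y * (J y a b / pY y * _)
        field_simp
      have hslice0 : 0 ≤ slice y := by
        rw [hsliceKL]; exact mul_nonneg (le_of_lt hc) hKL0
      refine ⟨hslice0, ?_⟩
      -- zero means
      have hfmean : ∑ a, f a * PA y a = 0 := by
        rw [pr_fiber_weighted' μ U (fun ω => Y ω = y) f]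
        exact hfm y hc
      have hgmean : ∑ b, g b * PB y b = 0 := by
        rw [pr_fiber_weighted' μ Z (fun ω => Y ω = y) g]
        exact hgm y hc
      -- centered expression for S y
      have hSc : S y = ∑ a, ∑ b, f a * g b * (J y a b - PA y a * PB y b / pY y) := by
        rw [hSexp y]
        have hz : ∑ a, ∑ b, f a * g b * (PA y a * PB y b / pY y) = 0 := by
          have h3 : ∀ a, ∑ b, f a * g b * (PA y a * PB y b / pY y)
              = (f a * PA y a) * (∑ b, g b * PB y b) / pY y := by
            intro a
            rw [Finset.mul_sum, Finset.sum_div]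
            refine Finset.sum_congr rfl fun b _ => by ring
          simp_rw [h3, hgmean]
          simp
        rw [← sub_zero (∑ a, ∑ b, f a * g b * J y a b), ← hz, ← Finset.sum_sub_distrib]
        refine Finset.sum_congr rfl fun a _ => ?_
        rw [← Finset.sum_sub_distrib]
        refine Finset.sum_congr rfl fun b _ => by ring
      have hdiff : ∀ a b, J y a b - PA y a * PB y b / pY y = pY y * (p (a,b) - q (a,b)) := by
        intro a b
        show _ = pY y * (J y a b / pY y - PA y a * PB y b / (pY y * pY y))
        field_simp
      have hterm : ∀ a b, |f a * g b * (J y a b - PA y a * PB y b / pY y)|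
          ≤ Mf * Mg * (pY y * |p (a,b) - q (a,b)|) := by
        intro a b
        by_cases hA : PA y a = 0
        · have hJ00 : J y a b = 0 := le_antisymm (hA ▸ hJA y a b) (hJ0 y a b)
          have : J y a b - PA y a * PB y b / pY y = 0 := by rw [hJ00, hA]; ring
          rw [this, mul_zero, abs_zero]
          positivity
        · by_cases hBz : PB y b = 0
          · have hJ00 : J y a b = 0 := le_antisymm (hBz ▸ hJB y a b) (hJ0 y a b)
            have : J y a b - PA y a * PB y b / pY y = 0 := by rw [hJ00, hBz]; ring
            rw [this, mul_zero, abs_zero]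
            positivity
          · obtain ⟨ωa, hωa⟩ := pr_pos_elim' (lt_of_le_of_ne (hPA0 y a) (Ne.symm hA))
            obtain ⟨ωb, hωb⟩ := pr_pos_elim' (lt_of_le_of_ne (hPB0 y b) (Ne.symm hBz))
            have hfa : |f a| ≤ Mf := hωa.1 ▸ hf ωa
            have hgb : |g b| ≤ Mg := hωb.1 ▸ hg ωb
            rw [abs_mul, abs_mul, hdiff a b, abs_mul, abs_of_pos hc]
            have h1 : 0 ≤ |p (a,b) - q (a,b)| := abs_nonneg _
            gcongr
      have hSb : |S y| ≤ Mf * Mg * (pY y * ∑ i : α × β, |p i - q i|) := by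
        rw [hSc]
        calc |∑ a, ∑ b, f a * g b * (J y a b - PA y a * PB y b / pY y)|
            ≤ ∑ a, ∑ b, |f a * g b * (J y a b - PA y a * PB y b / pY y)| := by
              refine le_trans (Finset.abs_sum_le_sum_abs _ _) ?_
              exact Finset.sum_le_sum fun a _ => Finset.abs_sum_le_sum_abs _ _
          _ ≤ ∑ a, ∑ b, Mf * Mg * (pY y * |p (a,b) - q (a,b)|) :=
              Finset.sum_le_sum fun a _ => Finset.sum_le_sum fun b _ => hterm a b
          _ = Mf * Mg * (pY y * ∑ i : α × β, |p i - q i|) := by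
              rw [Fintype.sum_prod_type, Finset.mul_sum, Finset.mul_sum]
              refine Finset.sum_congr rfl fun a _ => ?_
              rw [Finset.mul_sum, Finset.mul_sum]
      -- Pinsker conclusion
      have habs_nn : 0 ≤ ∑ i : α × β, |p i - q i| :=
        Finset.sum_nonneg fun i _ => abs_nonneg _
      have hps : ∑ i : α × β, |p i - q i|
          ≤ Real.sqrt (2 * ∑ i, p i * Real.log (p i / q i)) :=
        (Real.le_sqrt habs_nn (by linarith)).2 hpin
      have hfinal : pY y * Real.sqrt (2 * ∑ i, p i * Real.log (p i / q i))
          = Real.sqrt (pY y) * Real.sqrt (2 * slice y) := by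
        rw [hsliceKL]
        rw [show 2 * (pY y * ∑ i, p i * Real.log (p i / q i))
            = pY y * (2 * ∑ i, p i * Real.log (p i / q i)) by ring]
        rw [Real.sqrt_mul (hpY0 y), ← mul_assoc, Real.mul_self_sqrt (hpY0 y)]
      calc |S y| ≤ Mf * Mg * (pY y * ∑ i : α × β, |p i - q i|) := hSb
        _ ≤ Mf * Mg * (pY y * Real.sqrt (2 * ∑ i, p i * Real.log (p i / q i))) := by
            have := mul_le_mul_of_nonneg_left hps (le_of_lt hc)
            have := mul_le_mul_of_nonneg_left this (mul_nonneg hMf hMg)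
            exact this
        _ = Mf * Mg * (Real.sqrt (pY y) * Real.sqrt (2 * slice y)) := by rw [hfinal]
    · -- pY y = 0 case
      have hc0 : pY y = 0 := le_antisymm (not_lt.1 hc) (hpY0 y)
      have hJz : ∀ a b, J y a b = 0 := fun a b =>
        le_antisymm
          (le_trans (le_trans (hJB y a b) (pr_mono'_s2 hμ0 fun ω hω => hω.2)) hc0.le)
          (hJ0 y a b)
      have hsz : slice y = 0 :=
        Finset.sum_eq_zero fun a _ => Finset.sum_eq_zero fun b _ => by
          rw [hJz a b]; ring
      have hSz : S y = 0 := by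
        rw [hSexp y]
        exact Finset.sum_eq_zero fun a _ => Finset.sum_eq_zero fun b _ => by
          rw [hJz a b]; ring
      rw [hSz, hsz, hc0]
      simp
  -- assemble over y
  have hpYsum : ∑ y, pY y = 1 := by
    rw [pr_fiber_total' μ Y, hμ1]
  have hsl0 : ∀ y, 0 ≤ slice y := fun y => (key y).1
  have CS : ∑ y, Real.sqrt (pY y) * Real.sqrt (2 * slice y)
      ≤ Real.sqrt (2 * ∑ y, slice y) := by
    have h1 : (∑ y, Real.sqrt (pY y) * Real.sqrt (2 * slice y))^2
        ≤ (∑ y, pY y) * (∑ y, 2 * slice y) := by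
      calc (∑ y, Real.sqrt (pY y) * Real.sqrt (2 * slice y))^2
          ≤ (∑ y, Real.sqrt (pY y)^2) * (∑ y, Real.sqrt (2 * slice y)^2) :=
            Finset.sum_mul_sq_le_sq_mul_sq _ _ _
        _ = (∑ y, pY y) * (∑ y, 2 * slice y) := by
            rw [Finset.sum_congr rfl fun y _ => Real.sq_sqrt (hpY0 y),
              Finset.sum_congr rfl fun y _ => Real.sq_sqrt
                (by have := hsl0 y; linarith : (0:ℝ) ≤ 2 * slice y)]
    rw [hpYsum, one_mul, ← Finset.mul_sum] at h1
    exact (Real.le_sqrt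
      (Finset.sum_nonneg fun y _ =>
        mul_nonneg (Real.sqrt_nonneg _) (Real.sqrt_nonneg _))
      (mul_nonneg (by norm_num) (Finset.sum_nonneg fun y _ => hsl0 y))).2 h1
  rw [hcond]
  calc (∑ y : γ, |∑ ω, ({ω | Y ω = y}).indicator (fun ω => μ ω * (f (U ω) * g (Z ω))) ω|)
      = ∑ y, |S y| := rfl
    _ ≤ ∑ y, Mf * Mg * (Real.sqrt (pY y) * Real.sqrt (2 * slice y)) :=
        Finset.sum_le_sum fun y _ => (key y).2
    _ = Mf * Mg * ∑ y, Real.sqrt (pY y) * Real.sqrt (2 * slice y) := by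
        rw [Finset.mul_sum]
    _ ≤ Mf * Mg * Real.sqrt (2 * ∑ y, slice y) :=
        mul_le_mul_of_nonneg_left CS (mul_nonneg hMf hMg)
end

section
/- For each ε ∈ (0, 1/2), let Y be Bernoulli with P(Y=0)=ε, set Z = Y, and define f(Y) = (1{Y=0} − ε)/√(ε(1−ε)) and g(Z) = (1{Z=0} − ε)/√(ε(1−ε)). Then E[f(Y)] = E[g(Z)] = 0, Cov(f(Y), g(Z)) = 1, while I(Y;Z) = H(Y) = −ε log ε − (1−ε) log(1−ε) → 0 as ε → 0. Hence no inequality of the form |Cov(f,g)|/(||f||_{L²} ||g||_{L²}) ≤ √(2 I(Y;Z)) can hold in general. -/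
open scoped BigOperators

open Filter Topology

/-- correlation counterexample: with `Y` Bernoulli, `P(Y=0)=ε`, `Z=Y`,
and `f(Y) = g(Z) = (1{Y=0} − ε)/√(ε(1−ε))`, we have `E f = E g = 0`,
`Cov(f(Y),g(Z)) = 1`, `I(Y;Z) = H(Y) = −ε log ε − (1−ε) log(1−ε) → 0` as `ε → 0⁺`;
hence `|Cov|/(‖f‖_{L²}‖g‖_{L²}) ≤ √(2 I(Y;Z))` fails in general. -/
theorem correlation_counterexample :
    (∀ ε ∈ Set.Ioo (0 : ℝ) (1 / 2),
      (∑ b : Bool, (if b then 1 - ε else ε) *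
          (((if b then (0 : ℝ) else 1) - ε) / Real.sqrt (ε * (1 - ε)))) = 0 ∧
      (∑ b : Bool, (if b then 1 - ε else ε) *
          ((((if b then (0 : ℝ) else 1) - ε) / Real.sqrt (ε * (1 - ε))) *
            (((if b then (0 : ℝ) else 1) - ε) / Real.sqrt (ε * (1 - ε))))) = 1 ∧
      MI (fun b : Bool => if b then 1 - ε else ε) (id : Bool → Bool) id =
        ent (fun b : Bool => if b then 1 - ε else ε) (id : Bool → Bool) ∧
      ent (fun b : Bool => if b then 1 - ε else ε) (id : Bool → Bool) =
        -(ε * Real.log ε + (1 - ε) * Real.log (1 - ε))) ∧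
    Tendsto (fun ε : ℝ => -(ε * Real.log ε + (1 - ε) * Real.log (1 - ε)))
      (nhdsWithin 0 (Set.Ioi 0)) (nhds 0) ∧
    ¬ (∀ ε ∈ Set.Ioo (0 : ℝ) (1 / 2),
      |∑ b : Bool, (if b then 1 - ε else ε) *
          ((((if b then (0 : ℝ) else 1) - ε) / Real.sqrt (ε * (1 - ε))) *
            (((if b then (0 : ℝ) else 1) - ε) / Real.sqrt (ε * (1 - ε))))| /
        (Real.sqrt (∑ b : Bool, (if b then 1 - ε else ε) *
            (((if b then (0 : ℝ) else 1) - ε) / Real.sqrt (ε * (1 - ε))) ^ 2) *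
          Real.sqrt (∑ b : Bool, (if b then 1 - ε else ε) *
            (((if b then (0 : ℝ) else 1) - ε) / Real.sqrt (ε * (1 - ε))) ^ 2)) ≤
        Real.sqrt (2 *
          MI (fun b : Bool => if b then 1 - ε else ε) (id : Bool → Bool) id)) := by

  have key : ∀ ε ∈ Set.Ioo (0 : ℝ) (1 / 2),
      (∑ b : Bool, (if b then 1 - ε else ε) *
          (((if b then (0 : ℝ) else 1) - ε) / Real.sqrt (ε * (1 - ε)))) = 0 ∧
      (∑ b : Bool, (if b then 1 - ε else ε) *
          ((((if b then (0 : ℝ) else 1) - ε) / Real.sqrt (ε * (1 - ε))) *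
            (((if b then (0 : ℝ) else 1) - ε) / Real.sqrt (ε * (1 - ε))))) = 1 ∧
      MI (fun b : Bool => if b then 1 - ε else ε) (id : Bool → Bool) id =
        ent (fun b : Bool => if b then 1 - ε else ε) (id : Bool → Bool) ∧
      ent (fun b : Bool => if b then 1 - ε else ε) (id : Bool → Bool) =
        -(ε * Real.log ε + (1 - ε) * Real.log (1 - ε)) := by
    rintro ε ⟨h0, h2⟩
    have he : ε ≠ 0 := ne_of_gt h0
    have he1 : (1 : ℝ) - ε ≠ 0 := by nlinarith
    have hprod : (0 : ℝ) < ε * (1 - ε) := by nlinarith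
    have hs : (0 : ℝ) < Real.sqrt (ε * (1 - ε)) := Real.sqrt_pos.mpr hprod
    have hs2 : Real.sqrt (ε * (1 - ε)) * Real.sqrt (ε * (1 - ε)) = ε * (1 - ε) :=
      Real.mul_self_sqrt (le_of_lt hprod)
    refine ⟨?_, ?_, ?_, ?_⟩
    · simp only [Fintype.sum_bool, if_true, if_false, Bool.false_eq_true]
      field_simp
      ring
    · simp only [Fintype.sum_bool, if_true, if_false, Bool.false_eq_true, div_mul_div_comm, hs2]
      field_simp
      ring
    · simp only [MI, ent, pr, Fintype.sum_bool, Set.indicator_apply, Set.mem_setOf_eq, id]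
      norm_num
      ring
    · simp only [ent, pr, Fintype.sum_bool, Set.indicator_apply, Set.mem_setOf_eq, id]
      norm_num
      ring
  have hcont : Continuous fun ε : ℝ => -(ε * Real.log ε + (1 - ε) * Real.log (1 - ε)) := by
    have h1 : Continuous fun ε : ℝ => ε * Real.log ε := Real.continuous_mul_log
    have h2 : Continuous fun ε : ℝ => (1 - ε) * Real.log (1 - ε) :=
      Real.continuous_mul_log.comp (continuous_const.sub continuous_id)
    exact (h1.add h2).neg
  have htend : Tendsto (fun ε : ℝ => -(ε * Real.log ε + (1 - ε) * Real.log (1 - ε)))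
      (nhdsWithin 0 (Set.Ioi 0)) (nhds 0) := by
    have := (hcont.tendsto 0).mono_left (nhdsWithin_le_nhds (s := Set.Ioi (0 : ℝ)))
    simpa using this
  refine ⟨key, htend, ?_⟩
  intro H
  have hev1 : ∀ᶠ ε in nhdsWithin (0 : ℝ) (Set.Ioi 0),
      -(ε * Real.log ε + (1 - ε) * Real.log (1 - ε)) < 1 / 2 :=
    htend.eventually (gt_mem_nhds (by norm_num : (0 : ℝ) < 1 / 2))
  have hev2 : ∀ᶠ ε in nhdsWithin (0 : ℝ) (Set.Ioi 0), ε ∈ Set.Ioo (0 : ℝ) (1 / 2) :=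
    Ioo_mem_nhdsGT_of_mem (by constructor <;> norm_num)
  obtain ⟨ε, hfε, hmem⟩ := (hev1.and hev2).exists
  obtain ⟨hE, hCov, hMI, hent⟩ := key ε hmem
  have hsq : (∑ b : Bool, (if b then 1 - ε else ε) *
      (((if b then (0 : ℝ) else 1) - ε) / Real.sqrt (ε * (1 - ε))) ^ 2) = 1 := by
    simpa only [pow_two] using hCov
  have hle := H ε hmem
  rw [hCov, hsq, hMI, hent] at hle
  simp only [Real.sqrt_one, abs_one, mul_one, div_one] at hle
  have hlt : Real.sqrt (2 * -(ε * Real.log ε + (1 - ε) * Real.log (1 - ε))) < 1 := by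
    rw [Real.sqrt_lt' one_pos]
    nlinarith
  linarith
end
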